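/- Let T be a tree of order n rooted at a vertex r, let w : V(T) → ℕ, and let w_max = max{w(u) : u ∈ V(T)}. For a vertex u let c(u) = w(T_u). Call a nonnegative integer W r-nice if there is a set S of vertices of T with r ∈ S, T[S] connected, W ≤ w(S) ≤ W + w_max, and w(D) ≤ W for every connected component D of T − S. Let u(1), …, u(n) be an ordering of the vertices of T such that u(1) = r, c(u(1)) ≥ c(u(2)) ≥ … ≥ c(u(n)), and {u(1), …, u(i)} induces a connected subgraph of T for every i ∈ [n] (such an ordering exists). Let i₁ < … < i_k be the elements of the set I = {i ∈ [n−1] : c(u(i)) > c(u(i+1))}, set i₀ = 1 and i_{k+1} = n, and use the convention c(u(n+1)) = −∞. Then the smallest r-nice nonnegative integer equals min over j ∈ {0, 1, …, k+1} of max{ c(u(i_j + 1)), w(u(1)) + … + w(u(i_j)) − w_max }. -/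

import Mathlib

/-- Total weight of a set of vertices. -/
noncomputable def setWeight {V : Type*} (w : V → ℕ) (A : Set V) : ℕ := ∑ᶠ u ∈ A, w u

/-- `C` is the vertex set of a connected component of the subgraph of `G` induced by `S`. -/
def IsCompOf {V : Type*} (G : SimpleGraph V) (S C : Set V) : Prop :=
  C ⊆ S ∧ (G.induce C).Connected ∧ ∀ u ∈ C, ∀ v ∈ S, G.Adj u v → v ∈ C

/-- The vertex set of the subtree of the tree `G` rooted at `r` consisting of `u` and all of
its descendants: all vertices `x` such that every walk from `r` to `x` passes through `u`. -/
def subtreeAt {V : Type*} (G : SimpleGraph V) (r u : V) : Set V :=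
  {x : V | ∀ p : G.Walk r x, u ∈ p.support}

namespace RNiceAux
open SimpleGraph Walk

variable {V : Type*} {G : SimpleGraph V}

lemma reachable_induce_of_walk {T : Set V} :
    ∀ {a b : V} (p : G.Walk a b), (∀ x ∈ p.support, x ∈ T) → ∀ (ha : a ∈ T) (hb : b ∈ T),
      (G.induce T).Reachable ⟨a, ha⟩ ⟨b, hb⟩
  | _, _, Walk.nil, _, _, _ => Reachable.refl _
  | a, b, @Walk.cons _ _ _ e _ h q, hsup, ha, hb => by
    have hc : e ∈ T := hsup e (by simp)
    have hadj : (G.induce T).Adj ⟨a, ha⟩ ⟨e, hc⟩ := h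
    exact hadj.reachable.trans
      (reachable_induce_of_walk q (fun x hx => hsup x (by simp [hx])) hc hb)

lemma exists_walk_down {S : Set V} :
    ∀ {x y : ↥S} (_ : (G.induce S).Walk x y),
      ∃ q : G.Walk x.1 y.1, ∀ z ∈ q.support, ∃ hz : z ∈ S, (G.induce S).Reachable x ⟨z, hz⟩
  | x, _, Walk.nil => ⟨Walk.nil, by
      intro z hz
      rw [Walk.support_nil, List.mem_singleton] at hz
      subst hz
      exact ⟨x.2, Reachable.refl _⟩⟩
  | x, y, Walk.cons h q => by
    obtain ⟨q', hq'⟩ := exists_walk_down q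
    refine ⟨Walk.cons (show G.Adj x.1 (Subtype.val _) from h) q', ?_⟩
    intro z hz
    rw [Walk.support_cons, List.mem_cons] at hz
    rcases hz with rfl | hz
    · exact ⟨x.2, Reachable.refl _⟩
    · obtain ⟨hz1, hz2⟩ := hq' z hz
      exact ⟨hz1, (Adj.reachable h).trans hz2⟩

lemma takeUntil_cons [DecidableEq V] {a c b : V} (r : G.Adj a c) (q : G.Walk c b) {x : V}
    (hx : x ∈ (Walk.cons r q).support) (hxa : a ≠ x) (hx' : x ∈ q.support) :
    (Walk.cons r q).takeUntil x hx = Walk.cons r (q.takeUntil x hx') := by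
  simp only [Walk.takeUntil]
  rw [dif_neg hxa]

lemma takeUntil_or [DecidableEq V] :
    ∀ {a b : V} (p : G.Walk a b) {x y : V} (hx : x ∈ p.support) (hy : y ∈ p.support),
      y ∈ (p.takeUntil x hx).support ∨ x ∈ (p.takeUntil y hy).support := by
  intro a b p
  induction p with
  | nil =>
    intro x y hx hy
    rw [Walk.mem_support_nil_iff] at hx; subst hx
    exact Or.inr (Walk.start_mem_support _)
  | @cons a c b r q ih =>
    intro x y hx hy
    by_cases hxa : a = x
    · subst hxa; exact Or.inr (Walk.start_mem_support _)
    by_cases hya : a = y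
    · subst hya; exact Or.inl (Walk.start_mem_support _)
    have hx' : x ∈ q.support := by
      rcases List.mem_cons.mp ((Walk.support_cons r q) ▸ hx) with h' | h'
      · exact absurd h'.symm hxa
      · exact h'
    have hy' : y ∈ q.support := by
      rcases List.mem_cons.mp ((Walk.support_cons r q) ▸ hy) with h' | h'
      · exact absurd h'.symm hya
      · exact h'
    rw [takeUntil_cons r q hx hxa hx', takeUntil_cons r q hy hya hy']
    rcases ih hx' hy' with h' | h'
    · exact Or.inl (by rw [Walk.support_cons]; exact List.mem_cons_of_mem _ h')
    · exact Or.inr (by rw [Walk.support_cons]; exact List.mem_cons_of_mem _ h')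

noncomputable def tpath (hT : G.IsTree) (a b : V) : G.Walk a b :=
  (hT.existsUnique_path a b).choose

lemma tpath_isPath (hT : G.IsTree) (a b : V) : (tpath hT a b).IsPath :=
  (hT.existsUnique_path a b).choose_spec.1

lemma tpath_unique (hT : G.IsTree) {a b : V} {p : G.Walk a b} (hp : p.IsPath) :
    p = tpath hT a b :=
  (hT.existsUnique_path a b).choose_spec.2 p hp

lemma mem_subtreeAt_iff (hT : G.IsTree) {r v x : V} :
    x ∈ subtreeAt G r v ↔ v ∈ (tpath hT r x).support := by
  classical
  constructor
  · intro h; exact h _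
  · intro h p
    have hb : p.bypass = tpath hT r x := tpath_unique hT p.bypass_isPath
    exact Walk.support_bypass_subset p (hb ▸ h)

lemma takeUntil_tpath [DecidableEq V] (hT : G.IsTree) {r x y : V}
    (h : y ∈ (tpath hT r x).support) :
    (tpath hT r x).takeUntil y h = tpath hT r y :=
  tpath_unique hT ((tpath_isPath hT r x).takeUntil h)

lemma adj_path_or (hT : G.IsTree) {r a b : V} (h : G.Adj a b) :
    a ∈ (tpath hT r b).support ∨ b ∈ (tpath hT r a).support := by
  by_cases ha : a ∈ (tpath hT r b).support
  · exact Or.inl ha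
  · right
    have hp : (Walk.cons h (tpath hT r b).reverse).IsPath := by
      rw [Walk.cons_isPath_iff]
      refine ⟨(tpath_isPath hT r b).reverse, ?_⟩
      rwa [Walk.support_reverse, List.mem_reverse]
    have hp2 : (Walk.cons h (tpath hT r b).reverse).reverse.IsPath := hp.reverse
    have := tpath_unique hT hp2
    rw [← this, Walk.support_reverse, List.mem_reverse, Walk.support_cons]
    refine List.mem_cons_of_mem _ ?_
    rw [Walk.support_reverse, List.mem_reverse]
    exact Walk.end_mem_support _

lemma eq_of_mem_take_drop [DecidableEq V] {a b : V} {p : G.Walk a b} (hp : p.IsPath) {x y : V}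
    (hx : x ∈ p.support) (hyd : y ∈ (p.dropUntil x hx).support)
    (hyt : y ∈ (p.takeUntil x hx).support) : y = x := by
  by_contra hne
  have hspec := p.take_spec hx
  have hnodup : p.support.Nodup := hp.support_nodup
  rw [← hspec, Walk.support_append] at hnodup
  have hdis := (List.nodup_append'.mp hnodup).2.2
  have hy' : y ∈ ((p.dropUntil x hx).support).tail := by
    have hcons : (p.dropUntil x hx).support = x :: ((p.dropUntil x hx).support).tail := by
      rw [← Walk.support_eq_cons]
    rcases List.mem_cons.mp (hcons ▸ hyd) with h' | h'
    · exact absurd h' hne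
    · exact h'
  exact hdis hyt hy'

/-- Every vertex on the path from `v` down to `x` inside the subtree is in the subtree. -/
lemma subtree_walk (hT : G.IsTree) {r v x : V} (hx : x ∈ subtreeAt G r v) :
    ∃ q : G.Walk v x, ∀ z ∈ q.support, z ∈ subtreeAt G r v := by
  classical
  have hv : v ∈ (tpath hT r x).support := (mem_subtreeAt_iff hT).mp hx
  refine ⟨(tpath hT r x).dropUntil v hv, ?_⟩
  intro z hz
  have hz' : z ∈ (tpath hT r x).support := Walk.support_dropUntil_subset _ hv hz
  rw [mem_subtreeAt_iff hT]
  rcases takeUntil_or (tpath hT r x) hz' hv with h' | h'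
  · rwa [takeUntil_tpath hT hz'] at h'
  · have : z = v := eq_of_mem_take_drop (tpath_isPath hT r x) hv hz h'
    subst this
    exact Walk.end_mem_support _

lemma setWeight_eq_sum [Fintype V] (w : V → ℕ) (A : Set V) :
    setWeight w A = ∑ x ∈ (Set.toFinite A).toFinset, w x := by
  rw [setWeight, ← finsum_mem_coe_finset, Set.Finite.coe_toFinset]

lemma setWeight_mono [Fintype V] (w : V → ℕ) {A B : Set V} (h : A ⊆ B) :
    setWeight w A ≤ setWeight w B := by
  rw [setWeight_eq_sum, setWeight_eq_sum]
  exact Finset.sum_le_sum_of_subset (by simpa using h)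

lemma le_setWeight [Fintype V] (w : V → ℕ) {A : Set V} {v : V} (hv : v ∈ A) :
    w v ≤ setWeight w A := by
  rw [setWeight_eq_sum]
  exact Finset.single_le_sum (fun x _ => Nat.zero_le _) (by simpa using hv)

lemma setWeight_image_Icc [Fintype V] (w : V → ℕ) {u : ℕ → V} {m : ℕ}
    (hinj : Set.InjOn u (Set.Icc 1 m)) :
    setWeight w (u '' Set.Icc 1 m) = ∑ l ∈ Finset.Icc 1 m, w (u l) := by
  classical
  have himg : u '' Set.Icc 1 m = ↑((Finset.Icc 1 m).image u) := by
    rw [Finset.coe_image, Finset.coe_Icc]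
  rw [setWeight, himg, finsum_mem_coe_finset, Finset.sum_image]
  intro x hx y hy hxy
  exact hinj (by simpa using hx) (by simpa using hy) hxy

lemma isCompOf_class {A : Set V} {v : V} (hv : v ∈ A) :
    IsCompOf G A {y | ∃ hy : y ∈ A, (G.induce A).Reachable ⟨y, hy⟩ ⟨v, hv⟩} := by
  refine ⟨?_, ?_, ?_⟩
  · rintro y ⟨hy, -⟩; exact hy
  · rw [connected_iff]
    refine ⟨?_, ⟨⟨v, hv, Reachable.refl _⟩⟩⟩
    rintro ⟨x, hxA, hxr⟩ ⟨y, hyA, hyr⟩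
    obtain ⟨p⟩ := hxr.trans hyr.symm
    obtain ⟨q, hq⟩ := exists_walk_down p
    have hsub : ∀ z ∈ q.support,
        z ∈ {y | ∃ hy : y ∈ A, (G.induce A).Reachable ⟨y, hy⟩ ⟨v, hv⟩} := by
      intro z hz
      obtain ⟨hz1, hz2⟩ := hq z hz
      exact ⟨hz1, hz2.symm.trans hxr⟩
    exact reachable_induce_of_walk q hsub ⟨hxA, hxr⟩ ⟨hyA, hyr⟩
  · rintro x ⟨hxA, hxr⟩ y hyA hadj
    have hadj' : (G.induce A).Adj ⟨y, hyA⟩ ⟨x, hxA⟩ := hadj.symm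
    exact ⟨hyA, hadj'.reachable.trans hxr⟩

lemma tpath_support_subset (hT : G.IsTree) {P : Set V} (hconn : (G.induce P).Connected)
    {r x : V} (hr : r ∈ P) (hx : x ∈ P) : ∀ z ∈ (tpath hT r x).support, z ∈ P := by
  classical
  obtain ⟨p⟩ := hconn.preconnected ⟨r, hr⟩ ⟨x, hx⟩
  obtain ⟨q, hq⟩ := exists_walk_down p
  intro z hz
  have hbp : q.bypass = tpath hT r x := tpath_unique hT q.bypass_isPath
  exact (hq z (Walk.support_bypass_subset q (hbp ▸ hz))).1

lemma subtree_disjoint {S : Set V} {r v : V} (hr : r ∈ S) (hconn : (G.induce S).Connected)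
    (hv : v ∉ S) {x : V} (hx : x ∈ subtreeAt G r v) : x ∉ S := by
  intro hxS
  obtain ⟨p⟩ := hconn.preconnected ⟨r, hr⟩ ⟨x, hxS⟩
  obtain ⟨q, hq⟩ := exists_walk_down p
  exact hv (hq v (hx q)).1

lemma subtree_in_comp (hT : G.IsTree) {S : Set V} {r v : V} (hr : r ∈ S)
    (hconn : (G.induce S).Connected) (hv : v ∉ S) :
    ∃ D : Set V, IsCompOf G Sᶜ D ∧ subtreeAt G r v ⊆ D := by
  have hvc : v ∈ Sᶜ := hv
  refine ⟨{y | ∃ hy : y ∈ Sᶜ, (G.induce Sᶜ).Reachable ⟨y, hy⟩ ⟨v, hvc⟩}, isCompOf_class hvc, ?_⟩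
  intro x hx
  have hxc : x ∈ Sᶜ := subtree_disjoint hr hconn hv hx
  obtain ⟨q, hq⟩ := subtree_walk hT hx
  have hsub : ∀ z ∈ q.support, z ∈ Sᶜ := fun z hz =>
    subtree_disjoint hr hconn hv (hq z hz)
  exact ⟨hxc, (reachable_induce_of_walk q hsub hvc hxc).symm⟩

lemma comp_subset_subtree (hT : G.IsTree) {r : V} {u : ℕ → V} {n m : ℕ}
    (hbij : Set.BijOn u (Set.Icc 1 n) Set.univ) (hu1 : u 1 = r)
    (hinit : ∀ i, 1 ≤ i → i ≤ n → (G.induce (u '' Set.Icc 1 i)).Connected)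
    (hm1 : 1 ≤ m) (hmn : m ≤ n) {D : Set V} (hD : IsCompOf G (u '' Set.Icc 1 m)ᶜ D) :
    ∃ i, m + 1 ≤ i ∧ i ≤ n ∧ D ⊆ subtreeAt G r (u i) := by
  classical
  obtain ⟨hDsub, hDconn, hDclosed⟩ := hD
  obtain ⟨⟨v₀, hv₀⟩⟩ := hDconn.nonempty
  -- index set
  set K : Set ℕ := {i | 1 ≤ i ∧ i ≤ n ∧ u i ∈ D} with hK
  have hKne : K.Nonempty := by
    have : v₀ ∈ Set.univ := Set.mem_univ _
    rw [← hbij.image_eq] at this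
    obtain ⟨l, hl, rfl⟩ := this
    exact ⟨l, hl.1, hl.2, hv₀⟩
  set i₀ := sInf K with hi₀
  have hi₀K : i₀ ∈ K := Nat.sInf_mem hKne
  have hi₀min : ∀ l ∈ K, i₀ ≤ l := fun l hl => Nat.sInf_le hl
  have hi₀1 : 1 ≤ i₀ := hi₀K.1
  have hi₀n : i₀ ≤ n := hi₀K.2.1
  have hui₀D : u i₀ ∈ D := hi₀K.2.2
  have hi₀m : m + 1 ≤ i₀ := by
    by_contra hlt
    push_neg at hlt
    exact hDsub hui₀D ⟨i₀, ⟨hi₀1, by omega⟩, rfl⟩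
  refine ⟨i₀, hi₀m, hi₀n, ?_⟩
  -- main invariant along walks in D
  have main : ∀ (a b : V) (q : G.Walk a b), (∀ z ∈ q.support, z ∈ D) →
      u i₀ ∈ (tpath hT r a).support → u i₀ ∈ (tpath hT r b).support := by
    intro a b q
    induction q with
    | nil => intro _ h; exact h
    | @cons a e b radj q ih =>
      intro hsup hin
      have ha : a ∈ D := hsup a (by simp)
      have he : e ∈ D := hsup e (by simp)
      refine ih (fun z hz => hsup z (by simp [hz])) ?_
      rcases adj_path_or hT (r := r) radj with h1 | h2
      · have := takeUntil_tpath hT h1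
        rw [← this] at hin
        exact Walk.support_takeUntil_subset _ h1 hin
      · rcases takeUntil_or (tpath hT r a) h2 hin with h3 | h4
        · rwa [takeUntil_tpath hT h2] at h3
        · rw [takeUntil_tpath hT hin] at h4
          have hmem : e ∈ u '' Set.Icc 1 i₀ :=
            tpath_support_subset hT (hinit i₀ hi₀1 hi₀n)
              (⟨1, ⟨le_refl 1, hi₀1⟩, hu1⟩) (⟨i₀, ⟨hi₀1, le_refl i₀⟩, rfl⟩) e h4
          obtain ⟨l, hl, rfl⟩ := hmem
          have hlK : l ∈ K := ⟨hl.1, le_trans hl.2 hi₀n, he⟩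
          have : l = i₀ := le_antisymm hl.2 (hi₀min l hlK)
          subst this
          exact Walk.end_mem_support _
  intro x hx
  obtain ⟨p⟩ := hDconn.preconnected ⟨u i₀, hui₀D⟩ ⟨x, hx⟩
  obtain ⟨q, hq⟩ := exists_walk_down p
  have hqD : ∀ z ∈ q.support, z ∈ D := fun z hz => (hq z hz).1
  rw [mem_subtreeAt_iff hT]
  exact main (u i₀) x q hqD (Walk.end_mem_support _)

end RNiceAux

open RNiceAux in
theorem smallest_rnice_eq {V : Type*} [Fintype V] (G : SimpleGraph V) (hT : G.IsTree)
    (r : V) (w : V → ℕ) (n : ℕ) (hn : n = Fintype.card V)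
    (wmax : ℕ) (hwmax : wmax = ⨆ v, w v)
    -- `c u` is the weight of the subtree rooted at `u`
    (c : V → ℕ) (hc : ∀ v, c v = setWeight w (subtreeAt G r v))
    -- the ordering `u(1), …, u(n)` of the vertices
    (u : ℕ → V) (hbij : Set.BijOn u (Set.Icc 1 n) Set.univ) (hu1 : u 1 = r)
    (hmono : ∀ i, 1 ≤ i → i ≤ n - 1 → c (u (i + 1)) ≤ c (u i))
    (hinit : ∀ i, 1 ≤ i → i ≤ n → (G.induce (u '' Set.Icc 1 i)).Connected)
    -- `W` is `r`-nice
    (RNice : ℕ → Prop)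
    (hRNice : ∀ W : ℕ, RNice W ↔ ∃ S : Set V, r ∈ S ∧ (G.induce S).Connected ∧
        W ≤ setWeight w S ∧ setWeight w S ≤ W + wmax ∧
        ∀ D : Set V, IsCompOf G Sᶜ D → setWeight w D ≤ W)
    -- the relevant index set `{i₀, i₁, …, i_k, i_{k+1}} = {1, n} ∪ I`
    (J : Set ℕ) (hJ : J = {1, n} ∪ {i | 1 ≤ i ∧ i ≤ n - 1 ∧ c (u (i + 1)) < c (u i)})
    -- the function whose minimum over `J` is taken, with the convention `c(u(n+1)) = -∞`
    (g : ℕ → ℤ)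
    (hg : ∀ m : ℕ, g m =
      if m < n then
        max ((c (u (m + 1)) : ℤ)) ((∑ l ∈ Finset.Icc 1 m, (w (u l) : ℤ)) - (wmax : ℤ))
      else (∑ l ∈ Finset.Icc 1 n, (w (u l) : ℤ)) - (wmax : ℤ)) :
    ((sInf {W : ℕ | RNice W} : ℕ) : ℤ) = sInf (g '' J) := by
  classical
  haveI : Nonempty V := ⟨r⟩
  have hnpos : 1 ≤ n := by
    rw [hn]; exact Fintype.card_pos_iff.mpr ⟨r⟩
  set ps : ℕ → ℕ := fun m => ∑ l ∈ Finset.Icc 1 m, w (u l) with hps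
  have hg' : ∀ m : ℕ, g m =
      if m < n then max ((c (u (m + 1)) : ℤ)) ((ps m : ℤ) - (wmax : ℤ))
      else (ps n : ℤ) - (wmax : ℤ) := by
    intro m
    rw [hg m, hps]
    push_cast
    rfl
  have hinj : ∀ m, m ≤ n → Set.InjOn u (Set.Icc 1 m) := fun m hm =>
    hbij.injOn.mono (Set.Icc_subset_Icc_right hm)
  have hwS : ∀ m, m ≤ n → setWeight w (u '' Set.Icc 1 m) = ps m := fun m hm =>
    setWeight_image_Icc w (hinj m hm)
  have himg_univ : u '' Set.Icc 1 n = Set.univ := hbij.image_eq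
  have htotal : setWeight w Set.univ = ps n := by rw [← himg_univ]; exact hwS n le_rfl
  have hwmax_le : ∀ v, w v ≤ wmax := by
    intro v; rw [hwmax]; exact le_ciSup (Set.Finite.bddAbove (Set.finite_range w)) v
  have hwmax_total : wmax ≤ ps n := by
    obtain ⟨v₀, hv₀⟩ := Finite.exists_max w
    calc wmax ≤ w v₀ := by rw [hwmax]; exact ciSup_le hv₀
    _ ≤ setWeight w Set.univ := le_setWeight w (Set.mem_univ v₀)
    _ = ps n := htotal
  have hps_mono : ∀ a b, a ≤ b → ps a ≤ ps b := fun a b hab =>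
    Finset.sum_le_sum_of_subset (Finset.Icc_subset_Icc_right hab)
  have hps_succ : ∀ m, ps (m + 1) = ps m + w (u (m + 1)) := fun m =>
    Finset.sum_Icc_succ_top (by omega) _
  have hps1 : ps 1 = w (u 1) := by rw [hps]; simp
  have hcmono : ∀ i j, 1 ≤ i → i ≤ j → j ≤ n → c (u j) ≤ c (u i) := by
    intro i j hi hij
    induction j, hij using Nat.le_induction with
    | base => intro _; exact le_rfl
    | succ k hk ih =>
      intro hkn
      exact le_trans (hmono k (by omega) (by omega)) (ih (by omega))
  have hcle : ∀ v, c v ≤ ps n := fun v => by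
    rw [hc, ← htotal]; exact setWeight_mono w (Set.subset_univ _)
  -- the total weight is r-nice
  have hnice_total : RNice (ps n) := by
    rw [hRNice]
    refine ⟨Set.univ, Set.mem_univ r, himg_univ ▸ hinit n hnpos le_rfl,
      le_of_eq htotal.symm, by omega, ?_⟩
    intro D hD
    obtain ⟨⟨x, hx⟩⟩ := hD.2.1.nonempty
    exact absurd (hD.1 hx) (by simp)
  have hNE : {W | RNice W}.Nonempty := ⟨ps n, hnice_total⟩
  have h1J : (1 : ℕ) ∈ J := by rw [hJ]; exact Or.inl (Or.inl rfl)
  have hnJ : n ∈ J := by rw [hJ]; exact Or.inl (Or.inr rfl)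
  have hJsub : ∀ j ∈ J, 1 ≤ j ∧ j ≤ n := by
    intro j hj
    rw [hJ] at hj
    rcases hj with (rfl | rfl) | ⟨h1, h2, _⟩
    · exact ⟨le_rfl, hnpos⟩
    · exact ⟨hnpos, le_rfl⟩
    · omega
  -- P1 : each g j is (after truncation) r-nice
  have P1 : ∀ j, 1 ≤ j → j ≤ n → 0 ≤ g j ∧ RNice (g j).toNat := by
    intro j hj1 hjn
    have hg0 : 0 ≤ g j := by
      rw [hg' j]
      split_ifs
      · exact le_trans (by positivity) (le_max_left _ _)
      · push_cast; omega
    refine ⟨hg0, ?_⟩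
    set W := (g j).toNat with hWdef
    have hWZ : (W : ℤ) = g j := Int.toNat_of_nonneg hg0
    have hpsjN : ps j ≤ W + wmax := by
      have : (ps j : ℤ) ≤ (W : ℤ) + wmax := by
        rw [hWZ, hg' j]
        split_ifs with h
        · have := le_max_right ((c (u (j + 1)) : ℤ)) ((ps j : ℤ) - wmax)
          omega
        · have hj_eq : j = n := by omega
          rw [hj_eq]
          omega
      exact_mod_cast this
    have hcj : ∀ hh : j < n, c (u (j + 1)) ≤ W := by
      intro hh
      have : (c (u (j + 1)) : ℤ) ≤ (W : ℤ) := by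
        rw [hWZ, hg' j, if_pos hh]
        exact le_max_left _ _
      exact_mod_cast this
    have hWps : W ≤ ps n := by
      have : (W : ℤ) ≤ (ps n : ℤ) := by
        rw [hWZ, hg' j]
        split_ifs with h
        · have h1 := hcle (u (j + 1))
          have h2 := hps_mono j n hjn
          refine max_le (by exact_mod_cast h1) (by push_cast; omega)
        · push_cast; omega
      exact_mod_cast this
    set M := {m | 1 ≤ m ∧ m ≤ n ∧ ps m ≤ W + wmax} with hM
    have hjM : j ∈ M := ⟨hj1, hjn, hpsjN⟩
    have hMbdd : BddAbove M := ⟨n, fun x hx => hx.2.1⟩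
    have hmM : sSup M ∈ M := Nat.sSup_mem ⟨j, hjM⟩ hMbdd
    set m' := sSup M with hm'def
    obtain ⟨hm'1, hm'n, hm'ps⟩ := hmM
    have hjm' : j ≤ m' := le_csSup hMbdd hjM
    have hWlow : W ≤ ps m' := by
      rcases eq_or_lt_of_le hm'n with heq | hlt
      · rw [heq]; exact hWps
      · have hnotM : m' + 1 ∉ M := fun hmem => by
          have := le_csSup hMbdd hmem
          omega
        have hgt : W + wmax < ps (m' + 1) := by
          by_contra h
          push_neg at h
          exact hnotM ⟨by omega, by omega, h⟩
        have := hps_succ m'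
        have := hwmax_le (u (m' + 1))
        omega
    rw [hRNice]
    refine ⟨u '' Set.Icc 1 m', ⟨1, ⟨le_rfl, hm'1⟩, hu1⟩, hinit m' hm'1 hm'n, ?_, ?_, ?_⟩
    · rw [hwS m' hm'n]; exact hWlow
    · rw [hwS m' hm'n]; exact hm'ps
    · intro D hD
      rcases eq_or_lt_of_le hm'n with heq | hlt
      · rw [heq, himg_univ] at hD
        obtain ⟨⟨x, hx⟩⟩ := hD.2.1.nonempty
        exact absurd (hD.1 hx) (by simp)
      · obtain ⟨i, hi1, hin, hsubD⟩ := comp_subset_subtree hT hbij hu1 hinit hm'1 hm'n hD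
        have h1 : setWeight w D ≤ c (u i) := by
          rw [hc]
          exact setWeight_mono w hsubD
        have h2 : c (u i) ≤ c (u (m' + 1)) := hcmono (m' + 1) i (by omega) hi1 hin
        have h3 : c (u (m' + 1)) ≤ c (u (j + 1)) := hcmono (j + 1) (m' + 1) (by omega) (by omega) (by omega)
        have h4 : c (u (j + 1)) ≤ W := hcj (by omega)
        omega
  -- P2 : every r-nice W dominates some g m
  have P2 : ∀ W, RNice W → ∃ m, 1 ≤ m ∧ m ≤ n ∧ g m ≤ (W : ℤ) := by
    intro W hW
    obtain ⟨S, hrS, hSconn, hWle, hleW, hcomp⟩ := (hRNice W).mp hW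
    set M := {m | 1 ≤ m ∧ m ≤ n ∧ ps m ≤ W + wmax} with hM
    have h1M : (1 : ℕ) ∈ M := by
      refine ⟨le_rfl, hnpos, ?_⟩
      rw [hps1]
      have := hwmax_le (u 1)
      omega
    have hMbdd : BddAbove M := ⟨n, fun x hx => hx.2.1⟩
    have hmM : sSup M ∈ M := Nat.sSup_mem ⟨1, h1M⟩ hMbdd
    set m := sSup M with hmdef
    obtain ⟨hm1, hmn, hmps⟩ := hmM
    rcases eq_or_lt_of_le hmn with heq | hlt
    · refine ⟨n, hnpos, le_rfl, ?_⟩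
      rw [hg' n, if_neg (lt_irrefl n)]
      rw [heq] at hmps
      push_cast
      omega
    · have hnotM : m + 1 ∉ M := fun hmem => by
        have := le_csSup hMbdd hmem
        omega
      have hps1' : W + wmax < ps (m + 1) := by
        by_contra h
        push_neg at h
        exact hnotM ⟨by omega, by omega, h⟩
      have hex : ∃ i, 1 ≤ i ∧ i ≤ m + 1 ∧ u i ∉ S := by
        by_contra hall
        push_neg at hall
        have hsub : u '' Set.Icc 1 (m + 1) ⊆ S := by
          rintro x ⟨l, hl, rfl⟩
          exact hall l hl.1 hl.2
        have hle2 := setWeight_mono w hsub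
        rw [hwS (m + 1) (by omega)] at hle2
        omega
      obtain ⟨i, hi1, him, hiS⟩ := hex
      obtain ⟨D, hD, hsubD⟩ := subtree_in_comp hT hrS hSconn hiS
      have hcW : c (u i) ≤ W := by
        rw [hc]
        exact le_trans (setWeight_mono w hsubD) (hcomp D hD)
      have hcm1 : c (u (m + 1)) ≤ W :=
        le_trans (hcmono i (m + 1) hi1 him (by omega)) hcW
      refine ⟨m, hm1, by omega, ?_⟩
      rw [hg' m, if_pos hlt]
      refine max_le (by exact_mod_cast hcm1) (by push_cast; omega)
  -- P3 : the min over [1,n] is attained on J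
  have P3 : ∀ m, 1 ≤ m → m ≤ n → ∃ j ∈ J, g j ≤ g m := by
    intro m hm1 hmn
    rcases eq_or_lt_of_le hmn with rfl | hmlt
    · exact ⟨m, hnJ, le_rfl⟩
    · set K := J ∩ Set.Icc 1 m with hKdef
      have hKne : K.Nonempty := ⟨1, h1J, le_rfl, hm1⟩
      have hKbdd : BddAbove K := ⟨m, fun x hx => hx.2.2⟩
      have hjK : sSup K ∈ K := Nat.sSup_mem hKne hKbdd
      set j := sSup K with hj
      have hj1 : 1 ≤ j := hjK.2.1
      have hjm : j ≤ m := hjK.2.2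
      have hnotJ : ∀ k, j < k → k ≤ m → k ∉ J := by
        intro k hk1 hk2 hkJ
        have : k ≤ j := le_csSup hKbdd ⟨hkJ, by omega, hk2⟩
        omega
      have hconst : ∀ k, j ≤ k → k ≤ m → c (u (k + 1)) = c (u (j + 1)) := by
        intro k hjk
        induction k, hjk using Nat.le_induction with
        | base => intro _; rfl
        | succ k hk ih =>
          intro hkm
          have hkJ : k + 1 ∉ J := hnotJ (k + 1) (by omega) hkm
          have hnd : ¬ (c (u (k + 1 + 1)) < c (u (k + 1))) := by
            intro hlt
            exact hkJ (by rw [hJ]; exact Or.inr ⟨by omega, by omega, hlt⟩)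
          have heq : c (u (k + 1 + 1)) = c (u (k + 1)) :=
            le_antisymm (hmono (k + 1) (by omega) (by omega)) (not_lt.mp hnd)
          rw [heq]
          exact ih (by omega)
      refine ⟨j, hjK.1, ?_⟩
      rw [hg' j, hg' m, if_pos (lt_of_le_of_lt hjm hmlt), if_pos hmlt,
        ← hconst m hjm le_rfl]
      have := hps_mono j m hjm
      exact max_le_max le_rfl (by push_cast; omega)
  -- conclusion
  set A := sInf {W | RNice W} with hA
  have hAnice : RNice A := Nat.sInf_mem hNE
  have hglb : ∀ y ∈ g '' J, -(wmax : ℤ) ≤ y := by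
    rintro y ⟨j, hjJ, rfl⟩
    obtain ⟨hj1, hjn⟩ := hJsub j hjJ
    rw [hg' j]
    split_ifs
    · exact le_trans (by omega) (le_max_right _ _)
    · omega
  have hBdd : BddBelow (g '' J) := ⟨-(wmax : ℤ), hglb⟩
  have hne' : (g '' J).Nonempty := ⟨g 1, 1, h1J, rfl⟩
  have hd1 : sInf (g '' J) ≤ (A : ℤ) := by
    obtain ⟨m, hm1, hmn, hgm⟩ := P2 A hAnice
    obtain ⟨j, hjJ, hgj⟩ := P3 m hm1 hmn
    exact le_trans (csInf_le hBdd ⟨j, hjJ, rfl⟩) (le_trans hgj hgm)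
  have hd2 : (A : ℤ) ≤ sInf (g '' J) := by
    obtain ⟨j, hjJ, hBj⟩ := Int.csInf_mem hne' hBdd
    obtain ⟨hj1, hjn⟩ := hJsub j hjJ
    obtain ⟨hg0, hRN⟩ := P1 j hj1 hjn
    have hle : A ≤ (g j).toNat := Nat.sInf_le hRN
    rw [← hBj]
    calc (A : ℤ) ≤ ((g j).toNat : ℤ) := by exact_mod_cast hle
    _ = g j := Int.toNat_of_nonneg hg0
  omega
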